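/- arXiv:2210.16424 — 4 statements merged into one kernel-verified Lean document; each statement's English description precedes it below -/
import Mathlib

section
/- Let X be a finite set of n distinct points in ℝ^d, let C* = {c*_1,…,c*_K} attain φ*_K(X) with nonempty optimal clusters P_1,…,P_K (the fibers of a nearest-point assignment a* : X → C*), and suppose each c*_k equals the mean of the points of P_k. Sample x_1,…,x_K independently, with x_k uniformly distributed on P_k. Then E[Σ_{k=1}^K Σ_{y∈P_k} ‖y − x_k‖²] = 2·φ*_K(X). -/
open scoped BigOperators Classical

noncomputable section

abbrev Pt (d : ℕ) := EuclideanSpace ℝ (Fin d)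

variable {d : ℕ}

open RealInnerProductSpace

lemma bv {d : ℕ} (s : Finset (Pt d)) (c : Pt d)
    (hc : c = ((s.card : ℝ))⁻¹ • ∑ y ∈ s, y) (hne : s.Nonempty) :
    ∑ x ∈ s, ∑ y ∈ s, dist y x ^ 2 = 2 * s.card * ∑ y ∈ s, dist y c ^ 2 := by
  have hcard : ((s.card : ℝ)) ≠ 0 := by
    exact_mod_cast hne.card_pos.ne'
  have hz : ∑ y ∈ s, (y - c) = 0 := by
    rw [Finset.sum_sub_distrib, Finset.sum_const, sub_eq_zero,
      ← Nat.cast_smul_eq_nsmul ℝ, hc, smul_smul, mul_inv_cancel₀ hcard, one_smul]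
  calc ∑ x ∈ s, ∑ y ∈ s, dist y x ^ 2
      = ∑ x ∈ s, ∑ y ∈ s, (‖y - c‖ ^ 2 + ‖x - c‖ ^ 2 - 2 * ⟪y - c, x - c⟫) := by
        refine Finset.sum_congr rfl fun x _ => Finset.sum_congr rfl fun y _ => ?_
        have h : y - x = (y - c) - (x - c) := by abel
        rw [dist_eq_norm, h, norm_sub_sq_real]; ring
    _ = ∑ x ∈ s, ((∑ y ∈ s, ‖y - c‖ ^ 2) + (s.card : ℝ) * ‖x - c‖ ^ 2
          - 2 * ⟪∑ y ∈ s, (y - c), x - c⟫) := by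
        refine Finset.sum_congr rfl fun x _ => ?_
        rw [Finset.sum_sub_distrib, Finset.sum_add_distrib, Finset.sum_const,
          nsmul_eq_mul, ← Finset.mul_sum, sum_inner]
    _ = 2 * s.card * ∑ y ∈ s, dist y c ^ 2 := by
        rw [hz]
        simp only [inner_zero_left, mul_zero, sub_zero, Finset.sum_add_distrib,
          Finset.sum_const, nsmul_eq_mul, ← Finset.mul_sum, dist_eq_norm]
        ring

lemma sum_pi {α : Type*} [DecidableEq α] {K : ℕ} (t : Fin K → Finset α) (k : Fin K)
    (F : α → ℝ) :
    ∑ p ∈ Fintype.piFinset t, F (p k)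
      = (∏ j ∈ Finset.univ.erase k, ((t j).card : ℝ)) * ∑ x ∈ t k, F x := by
  have h := Finset.prod_univ_sum t (fun j x => if j = k then F x else 1)
  have hR : ∑ p ∈ Fintype.piFinset t, ∏ j, (if j = k then F (p j) else 1)
      = ∑ p ∈ Fintype.piFinset t, F (p k) := by
    refine Finset.sum_congr rfl fun p _ => ?_
    simp [Finset.prod_ite_eq']
  have hL : ∏ j, ∑ x ∈ t j, (if j = k then F x else 1)
      = (∑ x ∈ t k, F x) * ∏ j ∈ Finset.univ.erase k, ((t j).card : ℝ) := by
    rw [← Finset.mul_prod_erase Finset.univ _ (Finset.mem_univ k)]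
    simp only [if_pos rfl]
    congr 1
    refine Finset.prod_congr rfl fun j hj => ?_
    have hjk : j ≠ k := (Finset.mem_erase.mp hj).1
    simp [hjk]
  rw [← hR, ← h, hL, mul_comm]


/-- Distance from a point to a finite set of centroids (`0` if the set is empty). -/
def dSet (x : Pt d) (C : Finset (Pt d)) : ℝ :=
  if h : C.Nonempty then C.inf' h fun c => dist x c else 0

/-- `K`-means cost of a multiset of points w.r.t. a finite centroid set. -/
def kcost (X : Multiset (Pt d)) (C : Finset (Pt d)) : ℝ :=
  (X.map fun x => dSet x C ^ 2).sum

/-- Optimal `K`-means objective. -/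
def optCost (K : ℕ) (X : Multiset (Pt d)) : ℝ :=
  sInf {v | ∃ C : Finset (Pt d), C.Nonempty ∧ C.card ≤ K ∧ v = kcost X C}

/-- Set of entries of the tuple `c` with index `< j`. -/
def prefSet {K : ℕ} (c : Fin K → Pt d) (j : Fin K) : Finset (Pt d) :=
  (Finset.univ.filter fun i => i < j).image c

/-- Probability of picking `c j` as the `j`-th centroid in K-means++ initialization on `X`,
given that the previous centroids are the entries of `c` with index `< j`. -/
def stepProb (X : Multiset (Pt d)) {K : ℕ} (c : Fin K → Pt d) (j : Fin K) : ℝ :=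
  if (j : ℕ) = 0 then (X.count (c j) : ℝ) / (Multiset.card X : ℝ)
  else (X.count (c j) : ℝ) * dSet (c j) (prefSet c j) ^ 2 / kcost X (prefSet c j)

/-- PMF of K-means++ initialization with parameter `K` on the multiset `X`,
as a function on `K`-tuples of points. -/
def kmppProb (X : Multiset (Pt d)) {K : ℕ} (c : Fin K → Pt d) : ℝ :=
  ∏ j : Fin K, stepProb X c j

/-- Tuples with all entries in the finite set `X`. -/
def tupleSupp (X : Finset (Pt d)) (K : ℕ) : Finset (Fin K → Pt d) :=
  Fintype.piFinset fun _ => X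

/-- The nearest centroid among the entries of `c` to `x`, ties broken by smallest index
(junk value `x` when `K = 0`). -/
def assignPt {K : ℕ} (c : Fin K → Pt d) (x : Pt d) : Pt d :=
  if h : (Finset.univ.filter fun j : Fin K => ∀ i, dist x (c j) ≤ dist x (c i)).Nonempty
  then c ((Finset.univ.filter fun j : Fin K => ∀ i, dist x (c j) ≤ dist x (c i)).min' h)
  else x

/-- If `C* = {c*_1, …, c*_K}` attains `φ*_K(X)` with nonempty optimal
clusters `P_1, …, P_K` (fibers of a nearest-point assignment `a*`), each `c*_k` being the
mean of `P_k`, and `x_1, …, x_K` are sampled independently with `x_k` uniform on `P_k`,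
then `E[Σ_k Σ_{y ∈ P_k} ‖y − x_k‖²] = 2 φ*_K(X)`. -/
theorem uniform_seeding_per_optimal_cluster {d K : ℕ} (hK : 1 ≤ K)
    (X : Finset (Pt d))
    (cstar : Fin K → Pt d) (hinj : Function.Injective cstar)
    (hopt : kcost X.val (Finset.univ.image cstar) = optCost K X.val)
    (astar : Pt d → Pt d)
    (hastar : ∀ x ∈ X, (∃ k, astar x = cstar k) ∧
      dist x (astar x) = dSet x (Finset.univ.image cstar))
    (P : Fin K → Finset (Pt d))
    (hP : ∀ k, P k = X.filter fun y => astar y = cstar k)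
    (hPne : ∀ k, (P k).Nonempty)
    (hmean : ∀ k, cstar k = (((P k).card : ℝ))⁻¹ • ∑ y ∈ P k, y) :
    ∑ xs ∈ Fintype.piFinset (fun k => P k),
        (∏ k : Fin K, (1 : ℝ) / (P k).card) * ∑ k : Fin K, ∑ y ∈ P k, dist y (xs k) ^ 2
      = 2 * optCost K X.val := by
  classical
  have hcard : ∀ k, ((P k).card : ℝ) ≠ 0 := fun k => by
    exact_mod_cast (hPne k).card_pos.ne'
  have hpart : ∀ g : Pt d → ℝ, ∑ x ∈ X, g x = ∑ k : Fin K, ∑ x ∈ P k, g x := by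
    intro g
    have h1 : ∀ x ∈ X, g x = ∑ k : Fin K, if astar x = cstar k then g x else 0 := by
      intro x hx
      obtain ⟨⟨k0, hk0⟩, -⟩ := hastar x hx
      rw [Finset.sum_eq_single k0]
      · simp [hk0]
      · intro b _ hb
        rw [if_neg]
        intro h
        exact hb (hinj (h.symm.trans hk0))
      · simp
    rw [Finset.sum_congr rfl h1, Finset.sum_comm]
    refine Finset.sum_congr rfl fun k _ => ?_
    rw [hP, Finset.sum_filter]
  have hd : ∀ k, ∀ x ∈ P k, dSet x (Finset.univ.image cstar) = dist x (cstar k) := by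
    intro k x hx
    rw [hP] at hx
    obtain ⟨hxX, hax⟩ := Finset.mem_filter.mp hx
    rw [← (hastar x hxX).2, hax]
  have hkc : kcost X.val (Finset.univ.image cstar)
      = ∑ k : Fin K, ∑ y ∈ P k, dist y (cstar k) ^ 2 := by
    have h0 : kcost X.val (Finset.univ.image cstar)
        = ∑ x ∈ X, dSet x (Finset.univ.image cstar) ^ 2 := rfl
    rw [h0, hpart]
    exact Finset.sum_congr rfl fun k _ =>
      Finset.sum_congr rfl fun y hy => by rw [hd k y hy]
  have hstep : ∀ k : Fin K,
      (∏ j : Fin K, (1 : ℝ) / (P j).card) *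
        ∑ xs ∈ Fintype.piFinset (fun k => P k), ∑ y ∈ P k, dist y (xs k) ^ 2
        = 2 * ∑ y ∈ P k, dist y (cstar k) ^ 2 := by
    intro k
    rw [sum_pi (fun k => P k) k (fun x => ∑ y ∈ P k, dist y x ^ 2)]
    rw [bv (P k) (cstar k) (hmean k) (hPne k), ← mul_assoc]
    have hw : (∏ j : Fin K, (1 : ℝ) / (P j).card) *
        (∏ j ∈ Finset.univ.erase k, ((P j).card : ℝ)) = ((P k).card : ℝ)⁻¹ := by
      rw [← Finset.mul_prod_erase Finset.univ (fun j => (1 : ℝ) / (P j).card)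
        (Finset.mem_univ k), one_div, mul_assoc, ← Finset.prod_mul_distrib]
      have h2 : ∀ j ∈ Finset.univ.erase k,
          (1 : ℝ) / (P j).card * ((P j).card : ℝ) = 1 :=
        fun j _ => one_div_mul_cancel (hcard j)
      rw [Finset.prod_congr rfl h2, Finset.prod_const_one, mul_one]
    rw [hw, ← mul_assoc]
    rw [show ((P k).card : ℝ)⁻¹ * (2 * (P k).card) = 2 by
      rw [mul_comm 2 ((P k).card : ℝ), ← mul_assoc, inv_mul_cancel₀ (hcard k), one_mul]]
  rw [← hopt, hkc, ← Finset.mul_sum, Finset.sum_comm, Finset.mul_sum,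
    Finset.mul_sum]
  exact Finset.sum_congr rfl fun k _ => hstep k
end
end

section
/- Exact unlearning (Lemma 1, part 1): the unlearned model produced by Algorithm 3 has exactly the distribution of K-means++ initialization with parameter K on X' = X ∖ X_R; that is, as PMFs on K-tuples of points, P(U(A(X), X, X_R) = C) = P(A(X') = C) for every K-tuple C, where A denotes K-means++ initialization with parameter K and U denotes the unlearning procedure of Algorithm 3. -/
open scoped BigOperators Classical

noncomputable section

variable {d : ℕ}

/-- Transition probability of Algorithm 3 (unlearning for K-means++ initialization):
given the trained tuple `C` on the original set, `unlearnProb X' XR C C'` is the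
probability that the procedure outputs `C'`, where `X'` is the retained set and `XR` the
removal set.  If no entry of `C` lies in `XR` the output is `C` itself; otherwise the
prefix of `C` before the first entry in `XR` is kept and the remaining centroids are
resampled by continuing K-means++ sampling on `X'`. -/
def unlearnProb (X' XR : Finset (Pt d)) {K : ℕ} (C C' : Fin K → Pt d) : ℝ :=
  if h : (Finset.univ.filter fun j : Fin K => C j ∈ XR).Nonempty then
    if ∀ j < (Finset.univ.filter fun j : Fin K => C j ∈ XR).min' h, C' j = C j then
      ∏ j ∈ Finset.univ.filter
          (fun j : Fin K => (Finset.univ.filter fun j' : Fin K => C j' ∈ XR).min' h ≤ j),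
        stepProb X'.val C' j
    else 0
  else if C' = C then 1 else 0

section AuxLemmas

variable {K : ℕ}

lemma count_val_real (X : Finset (Pt d)) (x : Pt d) :
    (X.val.count x : ℝ) = if x ∈ X then 1 else 0 := by
  by_cases h : x ∈ X
  · simp [h, Multiset.count_eq_one_of_mem X.nodup h]
  · simp [h, Multiset.count_eq_zero_of_notMem (by exact h)]

lemma kcost_finset (Y : Finset (Pt d)) (S : Finset (Pt d)) :
    kcost Y.val S = ∑ x ∈ Y, dSet x S ^ 2 := rfl

lemma dSet_nonneg (x : Pt d) (S : Finset (Pt d)) : 0 ≤ dSet x S := by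
  unfold dSet
  split
  · exact Finset.le_inf' _ _ fun c _ => dist_nonneg
  · exact le_refl _

lemma dSet_pos {x : Pt d} {S : Finset (Pt d)} (hS : S.Nonempty) (hx : x ∉ S) :
    0 < dSet x S := by
  unfold dSet
  rw [dif_pos hS]
  rw [Finset.lt_inf'_iff]
  intro c hc
  exact dist_pos.2 fun h => hx (h ▸ hc)

lemma kcost_nonneg (Y : Finset (Pt d)) (S : Finset (Pt d)) : 0 ≤ kcost Y.val S := by
  rw [kcost_finset]
  exact Finset.sum_nonneg fun x _ => sq_nonneg _

lemma kcost_pos {Y S : Finset (Pt d)} (hS : S.Nonempty) (h : ∃ y ∈ Y, y ∉ S) :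
    0 < kcost Y.val S := by
  rw [kcost_finset]
  obtain ⟨y, hy, hys⟩ := h
  exact Finset.sum_pos' (fun x _ => sq_nonneg _) ⟨y, hy, pow_pos (dSet_pos hS hys) 2⟩

lemma kcost_pos_of_card {Y S : Finset (Pt d)} (hS : S.Nonempty) (h : S.card < Y.card) :
    0 < kcost Y.val S := by
  refine kcost_pos hS ?_
  by_contra hc
  push_neg at hc
  exact absurd (Finset.card_le_card fun y hy => hc y hy) (not_le.2 h)

lemma prefSet_congr {c c' : Fin K → Pt d} {j : Fin K} (h : ∀ i, i < j → c i = c' i) :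
    prefSet c j = prefSet c' j := by
  unfold prefSet
  exact Finset.image_congr fun i hi => h i (Finset.mem_filter.1 hi).2

lemma stepProb_congr {Y : Multiset (Pt d)} {c c' : Fin K → Pt d} {j : Fin K}
    (h : ∀ i, i ≤ j → c i = c' i) : stepProb Y c j = stepProb Y c' j := by
  unfold stepProb
  rw [prefSet_congr (fun i hi => h i (le_of_lt hi)), h j le_rfl]

lemma prefSet_update (c : Fin K → Pt d) (j : Fin K) (x : Pt d) :
    prefSet (Function.update c j x) j = prefSet c j :=
  prefSet_congr fun i hi => Function.update_of_ne (ne_of_lt hi) _ _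

lemma prefSet_card_le (c : Fin K → Pt d) (j : Fin K) : (prefSet c j).card ≤ (j : ℕ) := by
  unfold prefSet
  refine le_trans Finset.card_image_le ?_
  have h1 : ((Finset.univ.filter fun i : Fin K => i < j)).card ≤ (Finset.range (j : ℕ)).card := by
    refine Finset.card_le_card_of_injOn Fin.val ?_ ?_
    · intro i hi
      simp only [Finset.mem_coe, Finset.mem_filter] at hi
      simpa using hi.2
    · intro a _ b _ hab
      exact Fin.ext hab
  simpa using h1

lemma prefSet_nonempty {j : Fin K} (c : Fin K → Pt d) (h : (j : ℕ) ≠ 0) :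
    (prefSet c j).Nonempty := by
  refine ⟨c ⟨0, lt_of_le_of_lt (Nat.zero_le _) j.isLt⟩, ?_⟩
  unfold prefSet
  refine Finset.mem_image.2 ⟨_, ?_, rfl⟩
  refine Finset.mem_filter.2 ⟨Finset.mem_univ _, ?_⟩
  exact Fin.lt_def.2 (Nat.pos_of_ne_zero h)

lemma sum_stepProb (Y : Finset (Pt d)) (hY : K ≤ Y.card) (c : Fin K → Pt d) (j : Fin K) :
    ∑ x ∈ Y, stepProb Y.val (Function.update c j x) j = 1 := by
  have hYpos : 0 < Y.card := lt_of_lt_of_le j.pos hY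
  by_cases hj : (j : ℕ) = 0
  · simp only [stepProb, if_pos hj, Function.update_self]
    rw [Finset.sum_congr rfl (fun x hx => by
      rw [count_val_real, if_pos hx])]
    rw [Finset.sum_const, nsmul_eq_mul]
    have : (Y.card : ℝ) ≠ 0 := Nat.cast_ne_zero.2 hYpos.ne'
    simp only [Finset.card_val]
    field_simp
  · simp only [stepProb, if_neg hj, Function.update_self, prefSet_update]
    have hpos : 0 < kcost Y.val (prefSet c j) := by
      refine kcost_pos_of_card (prefSet_nonempty c hj) ?_
      exact lt_of_le_of_lt (prefSet_card_le c j) (lt_of_lt_of_le j.isLt hY)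
    rw [Finset.sum_congr rfl (fun x hx => by
      rw [count_val_real, if_pos hx, one_mul])]
    rw [← Finset.sum_div, ← kcost_finset, div_self hpos.ne']

end AuxLemmas

section Part2

variable {K : ℕ}

lemma stepProb_zero_of_not_mem {Y : Finset (Pt d)} {c : Fin K → Pt d} {j : Fin K}
    (h : c j ∉ Y) : stepProb Y.val c j = 0 := by
  unfold stepProb
  rw [count_val_real, if_neg h]
  split <;> simp

lemma keyD (X XR : Finset (Pt d)) (hXR : XR ⊆ X) (hK : K ≤ (X \ XR).card)
    (c : Fin K → Pt d) (j : Fin K) (hc : c j ∉ XR) :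
    (∑ x ∈ XR, stepProb X.val (Function.update c j x) j) * stepProb (X \ XR).val c j
      + stepProb X.val c j = stepProb (X \ XR).val c j := by
  have hcnt : (X.val.count (c j) : ℝ) = ((X \ XR).val.count (c j) : ℝ) := by
    simp only [count_val_real, Finset.mem_sdiff]
    by_cases h : c j ∈ X <;> simp [h, hc]
  have hcardX' : 0 < ((X \ XR).card : ℝ) := by
    exact_mod_cast lt_of_lt_of_le j.pos hK
  have hcards : (X.card : ℝ) = ((X \ XR).card : ℝ) + (XR.card : ℝ) := by
    have := Finset.card_sdiff_add_card_eq_card hXR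
    exact_mod_cast this.symm
  by_cases hj : (j : ℕ) = 0
  · simp only [stepProb, if_pos hj, Function.update_self, Finset.card_val]
    rw [Finset.sum_congr rfl (fun x hx => by rw [count_val_real, if_pos (hXR hx)])]
    rw [Finset.sum_const, nsmul_eq_mul, hcnt]
    have hX : (0:ℝ) < (X.card : ℝ) := by
      rw [hcards]; positivity
    rw [hcards]
    field_simp
    ring
  · simp only [stepProb, if_neg hj, Function.update_self, prefSet_update]
    set S := prefSet c j with hS
    have hSne : S.Nonempty := prefSet_nonempty c hj
    have hSK : S.card < K := lt_of_le_of_lt (prefSet_card_le c j) j.isLt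
    have hpos' : 0 < kcost (X \ XR).val S := kcost_pos_of_card hSne (lt_of_lt_of_le hSK hK)
    have hposR : 0 ≤ kcost XR.val S := kcost_nonneg _ _
    have hsplit : kcost X.val S = kcost (X \ XR).val S + kcost XR.val S := by
      rw [kcost_finset, kcost_finset, kcost_finset, Finset.sum_sdiff hXR]
    have hposX : 0 < kcost X.val S := by rw [hsplit]; positivity
    rw [Finset.sum_congr rfl (fun x hx => by
      rw [count_val_real, if_pos (hXR hx), one_mul])]
    rw [← Finset.sum_div, ← kcost_finset, hcnt, hsplit]
    set A := kcost (X \ XR).val S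
    set B := kcost XR.val S
    set t := (((X \ XR).val.count (c j) : ℝ)) * dSet (c j) S ^ 2
    have hAB : 0 < A + B := by positivity
    field_simp
    ring

lemma piFinset_filter_eq (t : Fin K → Finset (Pt d)) (p : Fin K) (x : Pt d) (hx : x ∈ t p) :
    (Fintype.piFinset t).filter (fun C => C p = x)
      = Fintype.piFinset (Function.update t p {x}) := by
  ext C
  simp only [Finset.mem_filter, Fintype.mem_piFinset]
  constructor
  · rintro ⟨h1, h2⟩ j
    by_cases hj : j = p
    · subst hj; simp [h2]
    · rw [Function.update_of_ne hj]; exact h1 j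
  · intro h
    have hp : C p = x := by have := h p; simpa using this
    refine ⟨fun j => ?_, hp⟩
    by_cases hj : j = p
    · subst hj; rw [hp]; exact hx
    · have := h j; rwa [Function.update_of_ne hj] at this

lemma sum_split (t : Fin K → Finset (Pt d)) (p : Fin K) (f : (Fin K → Pt d) → ℝ) :
    ∑ C ∈ Fintype.piFinset t, f C
      = ∑ x ∈ t p, ∑ C ∈ Fintype.piFinset (Function.update t p {x}), f C := by
  rw [← Finset.sum_fiberwise_of_maps_to (g := fun C => C p)
    (fun C hC => (Fintype.mem_piFinset.1 hC) p) f]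
  exact Finset.sum_congr rfl fun x hx => by rw [piFinset_filter_eq t p x hx]

lemma filter_ge_eq_insert {p : ℕ} (hp : p < K) :
    (Finset.univ.filter fun j : Fin K => p ≤ (j : ℕ))
      = insert ⟨p, hp⟩ (Finset.univ.filter fun j : Fin K => p + 1 ≤ (j : ℕ)) := by
  ext j
  simp only [Finset.mem_filter, Finset.mem_univ, true_and, Finset.mem_insert, Fin.ext_iff]
  omega

lemma prod_ge_split {p : ℕ} (hp : p < K) (g : Fin K → ℝ) :
    ∏ j ∈ Finset.univ.filter (fun j : Fin K => p ≤ (j : ℕ)), g j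
      = g ⟨p, hp⟩ * ∏ j ∈ Finset.univ.filter (fun j : Fin K => p + 1 ≤ (j : ℕ)), g j := by
  rw [filter_ge_eq_insert hp, Finset.prod_insert (by simp)]

lemma update_pattern (c : Fin K → Pt d) (Y : Finset (Pt d)) {p : ℕ} (hp : p < K) (x : Pt d) :
    Function.update (fun j : Fin K => if (j : ℕ) < p then ({c j} : Finset (Pt d)) else Y)
        ⟨p, hp⟩ {x}
      = fun j : Fin K => if (j : ℕ) < p + 1
          then ({Function.update c ⟨p, hp⟩ x j} : Finset (Pt d)) else Y := by
  funext j
  by_cases hj : j = ⟨p, hp⟩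
  · subst hj; simp
  · have hjp : (j : ℕ) ≠ p := fun h => hj (Fin.ext h)
    rw [Function.update_of_ne hj, Function.update_of_ne hj]
    by_cases h2 : (j : ℕ) < p
    · rw [if_pos h2, if_pos (by omega)]
    · rw [if_neg h2, if_neg (by omega)]

lemma sum_suffix (Y : Finset (Pt d)) (hY : K ≤ Y.card) :
    ∀ (n p : ℕ), K ≤ p + n → ∀ c : Fin K → Pt d,
      ∑ C ∈ Fintype.piFinset (fun j : Fin K => if (j : ℕ) < p then ({c j} : Finset (Pt d)) else Y),
        ∏ j ∈ Finset.univ.filter (fun j : Fin K => p ≤ (j : ℕ)), stepProb Y.val C j = 1 := by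
  have base : ∀ (p : ℕ), K ≤ p → ∀ c : Fin K → Pt d,
      ∑ C ∈ Fintype.piFinset (fun j : Fin K => if (j : ℕ) < p then ({c j} : Finset (Pt d)) else Y),
        ∏ j ∈ Finset.univ.filter (fun j : Fin K => p ≤ (j : ℕ)), stepProb Y.val C j = 1 := by
    intro p hp c
    have h1 : (fun j : Fin K => if (j : ℕ) < p then ({c j} : Finset (Pt d)) else Y)
        = fun j : Fin K => {c j} := by
      funext j; rw [if_pos (lt_of_lt_of_le j.isLt hp)]
    have h2 : (Finset.univ.filter fun j : Fin K => p ≤ (j : ℕ)) = ∅ := by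
      refine Finset.filter_false_of_mem fun j _ => ?_
      exact not_le.2 (lt_of_lt_of_le j.isLt hp)
    rw [h1, h2, Fintype.piFinset_singleton]
    simp
  intro n
  induction n with
  | zero => intro p hp c; exact base p (by omega) c
  | succ n ih =>
    intro p hp c
    by_cases hpK : K ≤ p
    · exact base p hpK c
    · push_neg at hpK
      rw [sum_split _ ⟨p, hpK⟩]
      have htY : (if ((⟨p, hpK⟩ : Fin K) : ℕ) < p then ({c ⟨p, hpK⟩} : Finset (Pt d)) else Y)
          = Y := by simp
      rw [Finset.sum_congr htY (fun x hx => by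
        rw [update_pattern c Y hpK x])]
      calc ∑ x ∈ Y, ∑ C ∈ Fintype.piFinset (fun j : Fin K => if (j : ℕ) < p + 1
              then ({Function.update c ⟨p, hpK⟩ x j} : Finset (Pt d)) else Y),
            ∏ j ∈ Finset.univ.filter (fun j : Fin K => p ≤ (j : ℕ)), stepProb Y.val C j
          = ∑ x ∈ Y, stepProb Y.val (Function.update c ⟨p, hpK⟩ x) ⟨p, hpK⟩ := by
            refine Finset.sum_congr rfl fun x hx => ?_
            set c' := Function.update c ⟨p, hpK⟩ x with hc'
            have hstep : ∀ C ∈ Fintype.piFinset (fun j : Fin K => if (j : ℕ) < p + 1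
                then ({c' j} : Finset (Pt d)) else Y),
                ∏ j ∈ Finset.univ.filter (fun j : Fin K => p ≤ (j : ℕ)), stepProb Y.val C j
                = stepProb Y.val c' ⟨p, hpK⟩
                  * ∏ j ∈ Finset.univ.filter (fun j : Fin K => p + 1 ≤ (j : ℕ)),
                      stepProb Y.val C j := by
              intro C hC
              rw [prod_ge_split hpK]
              congr 1
              refine stepProb_congr fun i hi => ?_
              have hiC := Fintype.mem_piFinset.1 hC i
              have : (i : ℕ) < p + 1 := by
                have h2 : (i : ℕ) ≤ p := hi
                omega
              rw [if_pos this] at hiC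
              exact Finset.mem_singleton.1 hiC
            rw [Finset.sum_congr rfl hstep, ← Finset.mul_sum,
              ih (p + 1) (by omega) c', mul_one]
        _ = 1 := sum_stepProb Y hY c ⟨p, hpK⟩

end Part2

section Part3

variable {K : ℕ}

lemma filter_fin_le {p : ℕ} (hp : p < K) :
    (Finset.univ.filter fun j : Fin K => (⟨p, hp⟩ : Fin K) ≤ j)
      = Finset.univ.filter fun j : Fin K => p ≤ (j : ℕ) := by
  ext j; simp [Fin.le_def]

lemma unlearnProb_hit (X' XR : Finset (Pt d)) {C C' : Fin K → Pt d} {j₀ : Fin K}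
    (h0 : C j₀ ∈ XR) (hlt : ∀ j, j < j₀ → C j ∉ XR) (hpre : ∀ j < j₀, C' j = C j) :
    unlearnProb X' XR C C'
      = ∏ j ∈ Finset.univ.filter (fun j : Fin K => j₀ ≤ j), stepProb X'.val C' j := by
  have hmem : j₀ ∈ Finset.univ.filter (fun j : Fin K => C j ∈ XR) := by simp [h0]
  have hne : (Finset.univ.filter fun j : Fin K => C j ∈ XR).Nonempty := ⟨j₀, hmem⟩
  have hmin : (Finset.univ.filter fun j : Fin K => C j ∈ XR).min' hne = j₀ := by
    refine le_antisymm (Finset.min'_le _ _ hmem) (Finset.le_min' _ _ _ fun j hj => ?_)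
    by_contra hc
    push_neg at hc
    exact hlt j hc (Finset.mem_filter.1 hj).2
  unfold unlearnProb
  rw [dif_pos hne]
  simp only [hmin]
  rw [if_pos hpre]

lemma unlearnProb_eq_zero (X' XR : Finset (Pt d)) {C C' : Fin K → Pt d} {j₀ : Fin K}
    (hne : C' j₀ ≠ C j₀) (hnot : ∀ j, j ≤ j₀ → C j ∉ XR) :
    unlearnProb X' XR C C' = 0 := by
  unfold unlearnProb
  split
  · next h =>
    have hm : C ((Finset.univ.filter fun j : Fin K => C j ∈ XR).min' h) ∈ XR :=
      (Finset.mem_filter.1 (Finset.min'_mem _ h)).2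
    have hj₀m : j₀ < (Finset.univ.filter fun j : Fin K => C j ∈ XR).min' h :=
      lt_of_not_ge fun hle => hnot _ hle hm
    rw [if_neg]
    intro hall
    exact hne (hall j₀ hj₀m)
  · next h =>
    rw [if_neg]
    intro hEq
    exact hne (congrFun hEq j₀)

lemma unlearnProb_zero_of_bad (X XR : Finset (Pt d)) {C C' : Fin K → Pt d} {j₀ : Fin K}
    (hbad : C' j₀ ∈ XR) :
    unlearnProb (X \ XR) XR C C' = 0 := by
  have hstep0 : stepProb (X \ XR).val C' j₀ = 0 :=
    stepProb_zero_of_not_mem (by simp [Finset.mem_sdiff, hbad])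
  unfold unlearnProb
  split
  · next h =>
    split
    · next hcond =>
      have hm : (Finset.univ.filter fun j : Fin K => C j ∈ XR).min' h ≤ j₀ := by
        by_contra hc
        push_neg at hc
        have hmemf : C j₀ ∈ XR := (hcond j₀ hc) ▸ hbad
        exact absurd (Finset.min'_le _ _ (by simp [hmemf])) (not_le.2 hc)
      exact Finset.prod_eq_zero (Finset.mem_filter.2 ⟨Finset.mem_univ _, hm⟩) hstep0
    · next => rfl
  · next h =>
    rw [if_neg]
    intro hEq
    subst hEq
    exact h ⟨j₀, by simp [hbad]⟩

lemma mainT (X XR : Finset (Pt d)) (hXR : XR ⊆ X) (hK : K ≤ (X \ XR).card)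
    (C' : Fin K → Pt d) (hC' : ∀ j, C' j ∉ XR) :
    ∀ (n p : ℕ), K ≤ p + n →
      ∑ C ∈ Fintype.piFinset
          (fun j : Fin K => if (j : ℕ) < p then ({C' j} : Finset (Pt d)) else X),
        (∏ j ∈ Finset.univ.filter (fun j : Fin K => p ≤ (j : ℕ)), stepProb X.val C j)
          * unlearnProb (X \ XR) XR C C'
        = ∏ j ∈ Finset.univ.filter (fun j : Fin K => p ≤ (j : ℕ)),
            stepProb (X \ XR).val C' j := by
  have hXcard : K ≤ X.card := le_trans hK (Finset.card_le_card Finset.sdiff_subset)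
  have base : ∀ (p : ℕ), K ≤ p →
      ∑ C ∈ Fintype.piFinset
          (fun j : Fin K => if (j : ℕ) < p then ({C' j} : Finset (Pt d)) else X),
        (∏ j ∈ Finset.univ.filter (fun j : Fin K => p ≤ (j : ℕ)), stepProb X.val C j)
          * unlearnProb (X \ XR) XR C C'
        = ∏ j ∈ Finset.univ.filter (fun j : Fin K => p ≤ (j : ℕ)),
            stepProb (X \ XR).val C' j := by
    intro p hp
    have h1 : (fun j : Fin K => if (j : ℕ) < p then ({C' j} : Finset (Pt d)) else X)
        = fun j : Fin K => {C' j} := by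
      funext j; rw [if_pos (lt_of_lt_of_le j.isLt hp)]
    have h2 : (Finset.univ.filter fun j : Fin K => p ≤ (j : ℕ)) = ∅ := by
      refine Finset.filter_false_of_mem fun j _ => ?_
      exact not_le.2 (lt_of_lt_of_le j.isLt hp)
    rw [h1, h2, Fintype.piFinset_singleton, Finset.sum_singleton, Finset.prod_empty,
      Finset.prod_empty, one_mul]
    unfold unlearnProb
    rw [dif_neg, if_pos rfl]
    rw [Finset.not_nonempty_iff_eq_empty]
    refine Finset.filter_false_of_mem fun j _ => hC' j
  intro n
  induction n with
  | zero => intro p hp; exact base p (by omega)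
  | succ n ih =>
    intro p hp
    by_cases hpK : K ≤ p
    · exact base p hpK
    · push_neg at hpK
      set j₀ : Fin K := ⟨p, hpK⟩ with hj₀
      set B := ∏ j ∈ Finset.univ.filter (fun j : Fin K => p ≤ (j : ℕ)),
          stepProb (X \ XR).val C' j with hB
      set P := ∏ j ∈ Finset.univ.filter (fun j : Fin K => p + 1 ≤ (j : ℕ)),
          stepProb (X \ XR).val C' j with hP
      have hBP : B = stepProb (X \ XR).val C' j₀ * P := prod_ge_split hpK _
      rw [sum_split _ j₀]
      have htY : (if ((j₀ : Fin K) : ℕ) < p then ({C' j₀} : Finset (Pt d)) else X) = X := by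
        simp [hj₀]
      rw [Finset.sum_congr htY (fun x _ => by rw [hj₀, update_pattern C' X hpK x])]
      -- evaluate the inner sum for each x ∈ X
      have hIall : ∀ x ∈ X,
          (∑ C ∈ Fintype.piFinset (fun j : Fin K => if (j : ℕ) < p + 1
              then ({Function.update C' ⟨p, hpK⟩ x j} : Finset (Pt d)) else X),
            (∏ j ∈ Finset.univ.filter (fun j : Fin K => p ≤ (j : ℕ)), stepProb X.val C j)
              * unlearnProb (X \ XR) XR C C')
          = if x ∈ XR then stepProb X.val (Function.update C' ⟨p, hpK⟩ x) ⟨p, hpK⟩ * B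
            else if x = C' j₀ then stepProb X.val C' j₀ * P else 0 := by
        intro x hx
        set c' := Function.update C' ⟨p, hpK⟩ x with hc'
        have hmemC : ∀ C ∈ Fintype.piFinset (fun j : Fin K => if (j : ℕ) < p + 1
            then ({c' j} : Finset (Pt d)) else X), ∀ i : Fin K, (i : ℕ) < p + 1 → C i = c' i := by
          intro C hC i hi
          have hiC := Fintype.mem_piFinset.1 hC i
          rw [if_pos hi] at hiC
          exact Finset.mem_singleton.1 hiC
        by_cases hxR : x ∈ XR
        · rw [if_pos hxR]
          have hsummand : ∀ C ∈ Fintype.piFinset (fun j : Fin K => if (j : ℕ) < p + 1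
              then ({c' j} : Finset (Pt d)) else X),
              (∏ j ∈ Finset.univ.filter (fun j : Fin K => p ≤ (j : ℕ)), stepProb X.val C j)
                * unlearnProb (X \ XR) XR C C'
              = (stepProb X.val c' ⟨p, hpK⟩ * B)
                  * ∏ j ∈ Finset.univ.filter (fun j : Fin K => p + 1 ≤ (j : ℕ)),
                      stepProb X.val C j := by
            intro C hC
            have hCi := hmemC C hC
            have hCp : C ⟨p, hpK⟩ = x := by
              rw [hCi ⟨p, hpK⟩ (Nat.lt_succ_self p)]
              simp [hc']
            have hU : unlearnProb (X \ XR) XR C C' = B := by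
              rw [unlearnProb_hit (X \ XR) XR (j₀ := ⟨p, hpK⟩) (by rw [hCp]; exact hxR)
                (fun j hj => by
                  rw [hCi j (by have : (j:ℕ) < p := hj; omega)]
                  rw [hc', Function.update_of_ne (ne_of_lt hj)]
                  exact hC' j)
                (fun j hj => by
                  rw [hCi j (by have : (j:ℕ) < p := hj; omega)]
                  rw [hc', Function.update_of_ne (ne_of_lt hj)])]
              rw [filter_fin_le hpK, hB]
            rw [hU, prod_ge_split hpK]
            rw [stepProb_congr (c' := c') (fun i hi => hCi i (by have : (i:ℕ) ≤ p := hi; omega))]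
            ring
          rw [Finset.sum_congr rfl hsummand, ← Finset.mul_sum,
            sum_suffix X hXcard n (p + 1) (by omega) c', mul_one]
        · rw [if_neg hxR]
          by_cases hxC : x = C' j₀
          · rw [if_pos hxC]
            have hc'C : c' = C' := by rw [hc', hxC, hj₀, Function.update_eq_self]
            rw [hc'C]
            have hsummand : ∀ C ∈ Fintype.piFinset (fun j : Fin K => if (j : ℕ) < p + 1
                then ({C' j} : Finset (Pt d)) else X),
                (∏ j ∈ Finset.univ.filter (fun j : Fin K => p ≤ (j : ℕ)), stepProb X.val C j)
                  * unlearnProb (X \ XR) XR C C'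
                = stepProb X.val C' j₀
                    * ((∏ j ∈ Finset.univ.filter (fun j : Fin K => p + 1 ≤ (j : ℕ)),
                        stepProb X.val C j) * unlearnProb (X \ XR) XR C C') := by
              intro C hC
              rw [prod_ge_split hpK]
              have : stepProb X.val C ⟨p, hpK⟩ = stepProb X.val C' ⟨p, hpK⟩ := by
                refine stepProb_congr fun i hi => ?_
                have hiC := Fintype.mem_piFinset.1 hC i
                rw [if_pos (by have : (i:ℕ) ≤ p := hi; omega)] at hiC
                exact Finset.mem_singleton.1 hiC
              rw [this, hj₀]
              ring
            rw [Finset.sum_congr rfl hsummand, ← Finset.mul_sum, ih (p + 1) (by omega), ← hP]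
          · rw [if_neg hxC]
            refine Finset.sum_eq_zero fun C hC => ?_
            have hCi := hmemC C hC
            have hU : unlearnProb (X \ XR) XR C C' = 0 := by
              refine unlearnProb_eq_zero (X \ XR) XR (j₀ := ⟨p, hpK⟩) ?_ ?_
              · rw [hCi ⟨p, hpK⟩ (Nat.lt_succ_self p), hc', Function.update_self]
                exact fun h => hxC h.symm
              · intro j hj
                rcases lt_or_eq_of_le hj with h | h
                · rw [hCi j (by have : (j:ℕ) < p := h; omega), hc',
                    Function.update_of_ne (ne_of_lt h)]
                  exact hC' j
                · rw [h, hCi ⟨p, hpK⟩ (Nat.lt_succ_self p), hc', Function.update_self]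
                  exact hxR
            rw [hU, mul_zero]
      rw [Finset.sum_congr rfl hIall]
      rw [← Finset.sum_sdiff hXR]
      have hA : ∑ x ∈ X \ XR,
          (if x ∈ XR then stepProb X.val (Function.update C' ⟨p, hpK⟩ x) ⟨p, hpK⟩ * B
            else if x = C' j₀ then stepProb X.val C' j₀ * P else 0)
          = stepProb X.val C' j₀ * P := by
        rw [Finset.sum_congr rfl (fun x hx => by
          rw [if_neg (Finset.mem_sdiff.1 hx).2])]
        rw [Finset.sum_ite_eq' (X \ XR) (C' j₀) (fun _ => stepProb X.val C' j₀ * P)]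
        split
        · rfl
        · next h =>
          have : C' j₀ ∉ X := fun hmem => h (Finset.mem_sdiff.2 ⟨hmem, hC' j₀⟩)
          rw [stepProb_zero_of_not_mem this, zero_mul]
      have hB2 : ∑ x ∈ XR,
          (if x ∈ XR then stepProb X.val (Function.update C' ⟨p, hpK⟩ x) ⟨p, hpK⟩ * B
            else if x = C' j₀ then stepProb X.val C' j₀ * P else 0)
          = (∑ x ∈ XR, stepProb X.val (Function.update C' ⟨p, hpK⟩ x) ⟨p, hpK⟩) * B := by
        rw [Finset.sum_mul]
        exact Finset.sum_congr rfl fun x hx => by rw [if_pos hx]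
      rw [hA, hB2]
      have hkey := keyD X XR hXR hK C' ⟨p, hpK⟩ (hC' ⟨p, hpK⟩)
      rw [hBP]
      have : stepProb (X \ XR).val C' j₀ = stepProb (X \ XR).val C' ⟨p, hpK⟩ := rfl
      linear_combination P * hkey

end Part3


/-- Lemma 1, part 1: exact unlearning.  The unlearned model produced by
Algorithm 3 has exactly the distribution of K-means++ initialization with parameter `K`
on `X' = X ∖ X_R`: for every `K`-tuple `C'`,
`P(U(A(X), X, X_R) = C') = P(A(X') = C')`. -/
theorem unlearning_is_exact {d K : ℕ} (X XR : Finset (Pt d))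
    (hXR : XR ⊆ X) (hcard : K ≤ (X \ XR).card) :
    ∀ C' : Fin K → Pt d,
      ∑ C ∈ tupleSupp X K, kmppProb X.val C * unlearnProb (X \ XR) XR C C'
        = kmppProb (X \ XR).val C' := by
  intro C'
  by_cases hC' : ∀ j, C' j ∉ XR
  · have h := mainT X XR hXR hcard C' hC' K 0 (by omega)
    have hset : (fun j : Fin K => if (j : ℕ) < 0 then ({C' j} : Finset (Pt d)) else X)
        = fun _ => X := by
      funext j; simp
    have hfilt : (Finset.univ.filter fun j : Fin K => 0 ≤ (j : ℕ)) = Finset.univ := by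
      simp
    rw [hset, hfilt] at h
    unfold tupleSupp kmppProb
    simpa using h
  · push_neg at hC'
    obtain ⟨j₀, hj₀⟩ := hC'
    have hrhs : kmppProb (X \ XR).val C' = 0 := by
      unfold kmppProb
      exact Finset.prod_eq_zero (Finset.mem_univ j₀)
        (stepProb_zero_of_not_mem (by simp [hj₀]))
    rw [hrhs]
    refine Finset.sum_eq_zero fun C _ => ?_
    rw [unlearnProb_zero_of_bad X XR hj₀, mul_zero]
end
end

section
/- Potential lower bound: let X be a set of n distinct points in ℝ^d, let K ≥ 1, fix C* and a* as in the optimal-clustering setup, and let x_i ∈ X with optimal cluster P = P_{x_i} and c* = a*(x_i). Then for every nonempty finite C ⊆ ℝ^d with |C| ≤ K, letting a_C(y) denote a nearest point of C to y, φ(X;C) ≥ (1/5)·( Σ_{y∈P} ‖y − c*‖² + Σ_{y∈X, y≠x_i} ‖a_C(y) − a*(y)‖² ). -/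
open scoped BigOperators Classical

noncomputable section

variable {d : ℕ}

/-- potential lower bound.  For `x_i ∈ X` with optimal cluster `P` and
`c* = a*(x_i)`, and any nonempty finite `C` with `|C| ≤ K`,
`φ(X;C) ≥ (1/5)(Σ_{y∈P} ‖y − c*‖² + Σ_{y∈X, y≠x_i} ‖a_C(y) − a*(y)‖²)`,
where `a_C(y)` is a nearest point of `C` to `y`. -/
theorem potential_lower_bound {d K : ℕ} (hK : 1 ≤ K)
    (X : Finset (Pt d))
    (Cstar : Finset (Pt d)) (hCne : Cstar.Nonempty) (hCcard : Cstar.card ≤ K)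
    (hCopt : kcost X.val Cstar = optCost K X.val)
    (astar : Pt d → Pt d)
    (hastar : ∀ y ∈ X, astar y ∈ Cstar ∧ dist y (astar y) = dSet y Cstar)
    (xi : Pt d) (hxi : xi ∈ X)
    (C : Finset (Pt d)) (hC : C.Nonempty) (hCK : C.card ≤ K)
    (aC : Pt d → Pt d)
    (haC : ∀ y ∈ X, aC y ∈ C ∧ dist y (aC y) = dSet y C) :
    kcost X.val C ≥
      (1 / 5) * ((∑ y ∈ X.filter (fun y => astar y = astar xi), dist y (astar xi) ^ 2) +
        ∑ y ∈ X.erase xi, dist (aC y) (astar y) ^ 2) := by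
  have hkc : ∀ (D : Finset (Pt d)), kcost X.val D = ∑ y ∈ X, dSet y D ^ 2 := fun D => rfl
  have hnn : ∀ (D : Finset (Pt d)), 0 ≤ kcost X.val D := by
    intro D; rw [hkc]; exact Finset.sum_nonneg fun y _ => sq_nonneg _
  have hopt : kcost X.val Cstar ≤ kcost X.val C := by
    rw [hCopt]
    apply csInf_le
    · exact ⟨0, fun v ⟨D, _, _, hv⟩ => hv ▸ hnn D⟩
    · exact ⟨C, hC, hCK, rfl⟩
  have h1 : (∑ y ∈ X.filter (fun y => astar y = astar xi), dist y (astar xi) ^ 2)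
      ≤ kcost X.val Cstar := by
    rw [hkc]
    calc ∑ y ∈ X.filter (fun y => astar y = astar xi), dist y (astar xi) ^ 2
        = ∑ y ∈ X.filter (fun y => astar y = astar xi), dSet y Cstar ^ 2 := by
          refine Finset.sum_congr rfl fun y hy => ?_
          rw [Finset.mem_filter] at hy
          rw [← hy.2, (hastar y hy.1).2]
      _ ≤ ∑ y ∈ X, dSet y Cstar ^ 2 :=
          Finset.sum_le_sum_of_subset_of_nonneg (Finset.filter_subset _ _)
            (fun y _ _ => sq_nonneg _)
  have h2 : ∑ y ∈ X.erase xi, dist (aC y) (astar y) ^ 2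
      ≤ 2 * kcost X.val C + 2 * kcost X.val Cstar := by
    rw [hkc, hkc]
    have key : ∀ y ∈ X.erase xi,
        dist (aC y) (astar y) ^ 2 ≤ 2 * dSet y C ^ 2 + 2 * dSet y Cstar ^ 2 := by
      intro y hy
      have hyX := Finset.mem_of_mem_erase hy
      have h3 : dist (aC y) (astar y) ≤ dSet y C + dSet y Cstar := by
        calc dist (aC y) (astar y) ≤ dist (aC y) y + dist y (astar y) := dist_triangle _ _ _
          _ = dSet y C + dSet y Cstar := by rw [dist_comm, (haC y hyX).2, (hastar y hyX).2]
      nlinarith [dist_nonneg (x := aC y) (y := astar y),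
        sq_nonneg (dSet y C - dSet y Cstar)]
    calc ∑ y ∈ X.erase xi, dist (aC y) (astar y) ^ 2
        ≤ ∑ y ∈ X.erase xi, (2 * dSet y C ^ 2 + 2 * dSet y Cstar ^ 2) :=
          Finset.sum_le_sum key
      _ ≤ ∑ y ∈ X, (2 * dSet y C ^ 2 + 2 * dSet y Cstar ^ 2) :=
          Finset.sum_le_sum_of_subset_of_nonneg (Finset.erase_subset _ _)
            (fun y _ _ => by positivity)
      _ = 2 * ∑ y ∈ X, dSet y C ^ 2 + 2 * ∑ y ∈ X, dSet y Cstar ^ 2 := by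
          rw [Finset.sum_add_distrib, Finset.mul_sum, Finset.mul_sum]
  linarith
end
end

section
/- Uniqueness of SCMA decoding: let p be a prime and let N, m be positive integers with N < p; identify each index j ∈ {1,…,N} with the corresponding element of the field F_p = Z/pZ (these elements are pairwise distinct and nonzero). Suppose q, q' : {1,…,N} → F_p each have at most m nonzero values, and Σ_{j=1}^N q_j·j^{i−1} = Σ_{j=1}^N q'_j·j^{i−1} holds in F_p for every i ∈ {1,…,2m}. Then q = q'. In other words, a vector of length N over F_p with at most m nonzero entries is uniquely determined by its first 2m power sums Σ_j q_j·j^{i−1}. -/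
open scoped BigOperators Classical

/-- uniqueness of SCMA decoding.  Let `p` be prime and `N < p`;
identify each index `j ∈ {1, …, N}` with the corresponding nonzero element of `F_p`.
A vector of length `N` over `F_p` with at most `m` nonzero entries is uniquely determined
by its first `2m` power sums `Σ_j q_j · j^{i−1}`, `i ∈ {1, …, 2m}`. -/
theorem scma_decoding_unique (p N m : ℕ) (hp : p.Prime) (hN : 0 < N) (hm : 0 < m)
    (hNp : N < p) (q q' : Fin N → ZMod p)
    (hq : (Finset.univ.filter fun j => q j ≠ 0).card ≤ m)
    (hq' : (Finset.univ.filter fun j => q' j ≠ 0).card ≤ m)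
    (h : ∀ i < 2 * m,
      ∑ j : Fin N, q j * (((j : ℕ) + 1 : ℕ) : ZMod p) ^ i
        = ∑ j : Fin N, q' j * (((j : ℕ) + 1 : ℕ) : ZMod p) ^ i) :
    q = q' := by
  haveI : Fact p.Prime := ⟨hp⟩
  haveI : NeZero p := ⟨hp.pos.ne'⟩
  set x : Fin N → ZMod p := fun j => (((j : ℕ) + 1 : ℕ) : ZMod p) with hx
  have hval : ∀ j : Fin N, (x j).val = (j : ℕ) + 1 := by
    intro j
    exact ZMod.val_natCast_of_lt (lt_of_le_of_lt (Nat.succ_le_of_lt j.isLt) hNp)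
  have hxinj : Function.Injective x := by
    intro a b hab
    have : (a : ℕ) + 1 = (b : ℕ) + 1 := by rw [← hval a, ← hval b, hab]
    exact Fin.ext (Nat.succ_injective this)
  set d : Fin N → ZMod p := fun j => q j - q' j with hd
  have hsyn : ∀ i < 2 * m, ∑ j : Fin N, d j * (x j) ^ i = 0 := by
    intro i hi
    have := h i hi
    simp only [hd, sub_mul]
    rw [Finset.sum_sub_distrib, this, sub_self]
  set S : Finset (Fin N) := Finset.univ.filter fun j => d j ≠ 0 with hS
  have hScard : S.card ≤ 2 * m := by
    have hsub : S ⊆ (Finset.univ.filter fun j => q j ≠ 0) ∪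
        (Finset.univ.filter fun j => q' j ≠ 0) := by
      intro j hj
      simp only [hS, Finset.mem_filter, Finset.mem_union, Finset.mem_univ, true_and] at *
      by_contra hc
      push_neg at hc
      exact hj (by simp [d, hc.1, hc.2])
    calc S.card ≤ _ := Finset.card_le_card hsub
      _ ≤ _ + _ := Finset.card_union_le _ _
      _ ≤ 2 * m := by omega
  -- key: any polynomial of natDegree < 2m pairs to zero with d
  have key : ∀ g : Polynomial (ZMod p), g.natDegree < 2 * m →
      ∑ j : Fin N, d j * g.eval (x j) = 0 := by
    intro g hg
    have heval : ∀ j : Fin N, g.eval (x j) =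
        ∑ i ∈ Finset.range (2 * m), g.coeff i * (x j) ^ i := by
      intro j
      exact Polynomial.eval_eq_sum_range' hg (x j)
    calc ∑ j : Fin N, d j * g.eval (x j)
        = ∑ j : Fin N, ∑ i ∈ Finset.range (2 * m), g.coeff i * (d j * (x j) ^ i) := by
          refine Finset.sum_congr rfl fun j _ => ?_
          rw [heval j, Finset.mul_sum]
          exact Finset.sum_congr rfl fun i _ => by ring
      _ = ∑ i ∈ Finset.range (2 * m), g.coeff i * ∑ j : Fin N, d j * (x j) ^ i := by
          rw [Finset.sum_comm]
          exact Finset.sum_congr rfl fun i _ => by rw [Finset.mul_sum]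
      _ = 0 := by
          refine Finset.sum_eq_zero fun i hi => ?_
          rw [hsyn i (Finset.mem_range.mp hi), mul_zero]
  have hdz : ∀ j : Fin N, d j = 0 := by
    intro j0
    by_contra hj0
    have hj0S : j0 ∈ S := by simp [hS, hj0]
    set g : Polynomial (ZMod p) :=
      ∏ k ∈ S.erase j0, (Polynomial.X - Polynomial.C (x k)) with hg
    have hdeg : g.natDegree < 2 * m := by
      have : g.natDegree = (S.erase j0).card := by
        rw [hg, Polynomial.natDegree_prod]
        · simp
        · intro k _; exact Polynomial.X_sub_C_ne_zero (x k)
      rw [this]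
      have := Finset.card_erase_of_mem hj0S
      omega
    have hsum : ∑ j : Fin N, d j * g.eval (x j) = d j0 * g.eval (x j0) := by
      rw [← Finset.sum_subset (Finset.subset_univ S)]
      · rw [Finset.sum_eq_single j0]
        · intro k hk hkj0
          have hk' : k ∈ S.erase j0 := Finset.mem_erase.mpr ⟨hkj0, hk⟩
          have : g.eval (x k) = 0 := by
            rw [hg, Polynomial.eval_prod]
            exact Finset.prod_eq_zero hk' (by simp)
          rw [this, mul_zero]
        · intro hj; exact absurd hj0S hj
      · intro k _ hk
        simp only [hS, Finset.mem_filter, Finset.mem_univ, true_and, not_not] at hk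
        rw [hk, zero_mul]
    have hevalne : g.eval (x j0) ≠ 0 := by
      rw [hg, Polynomial.eval_prod]
      refine Finset.prod_ne_zero_iff.mpr fun k hk => ?_
      simp only [Polynomial.eval_sub, Polynomial.eval_X, Polynomial.eval_C, sub_ne_zero]
      intro hxe
      exact (Finset.mem_erase.mp hk).1 (hxinj hxe.symm) |>.elim
    have := key g hdeg
    rw [hsum] at this
    exact hj0 (by
      rcases mul_eq_zero.mp this with h1 | h2
      · exact h1
      · exact absurd h2 hevalne)
  funext j
  have := hdz j
  simp only [hd, sub_eq_zero] at this
  exact this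
end
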